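/- As a commutative monoid under addition, a Weil-algebra A = ℕ[x₁,…,xₙ]/(xᵢxⱼ : i ∼ j) is free on the set of its nonzero monomials, i.e. on the square-free monomials x_{i₁}⋯x_{i_k} (including the empty monomial 1) such that no two indices i_p, i_q with p ≠ q satisfy i_p ∼ i_q; every element of A is a unique ℕ-linear combination of these monomials. -/

import Mathlib

open MvPolynomial

/-- A presentation of a Weil-algebra: a finite set of generators together with a
reflexive symmetric relation `sim`; the algebra is `ℕ[xᵢ]/(xᵢxⱼ : sim i j)`. -/
structure WeilPres where
  ι : Type
  fintypeI : Fintype ι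
  sim : ι → ι → Prop
  refl : ∀ i, sim i i
  symm : ∀ i j, sim i j → sim j i

attribute [instance] WeilPres.fintypeI

/-- The underlying commutative semiring `ℕ[x₁,…,xₙ]/(xᵢxⱼ : i ∼ j)` of a Weil presentation. -/
def WeilPres.Carrier (P : WeilPres) : Type :=
  (ringConGen fun p q : MvPolynomial P.ι ℕ =>
    ∃ i j, P.sim i j ∧ p = X i * X j ∧ q = 0).Quotient

noncomputable instance (P : WeilPres) : CommSemiring P.Carrier :=
  inferInstanceAs (CommSemiring (RingCon.Quotient _))

/-- The generator `xᵢ` of the Weil-algebra presented by `P`. -/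
noncomputable def WeilPres.gen (P : WeilPres) (i : P.ι) : P.Carrier :=
  RingCon.mk' _ (X i)

namespace WeilAux

open scoped Classical

variable (P : WeilPres)

/-- The defining relation. -/
def rel (p q : MvPolynomial P.ι ℕ) : Prop :=
  ∃ i j, P.sim i j ∧ p = X i * X j ∧ q = 0

/-- Admissible (independent) sets of generators. -/
def Adm (s : Finset P.ι) : Prop := ∀ i ∈ s, ∀ j ∈ s, i ≠ j → ¬ P.sim i j

theorem adm_subset {a s : Finset P.ι} (h : a ⊆ s) (hs : Adm P s) : Adm P a :=
  fun i hi j hj => hs i (h hi) j (h hj)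

/-- Indicator finsupp of a finset. -/
noncomputable def ind (s : Finset P.ι) : P.ι →₀ ℕ := ∑ i ∈ s, Finsupp.single i 1

theorem ind_apply (s : Finset P.ι) (i : P.ι) : ind P s i = if i ∈ s then 1 else 0 := by
  classical
  rw [ind, Finset.sum_apply']
  simp [Finsupp.single_apply]

theorem support_ind (s : Finset P.ι) : (ind P s).support = s := by
  ext i
  simp [Finsupp.mem_support_iff, ind_apply]

theorem ind_inj {s t : Finset P.ι} (h : ind P s = ind P t) : s = t := by
  rw [← support_ind P s, ← support_ind P t, h]

/-- The coefficient-extraction map. -/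
noncomputable def phi (p : MvPolynomial P.ι ℕ) (s : Finset P.ι) : ℕ :=
  if Adm P s then MvPolynomial.coeff (ind P s) p else 0

theorem phi_add (p q : MvPolynomial P.ι ℕ) : phi P (p + q) = phi P p + phi P q := by
  funext s
  simp only [phi, MvPolynomial.coeff_add, Pi.add_apply]
  split <;> simp

/-- Convolution product on coefficient functions. -/
noncomputable def conv (f g : Finset P.ι → ℕ) (s : Finset P.ι) : ℕ :=
  if Adm P s then ∑ a ∈ s.powerset, f a * g (s \ a) else 0

theorem decomp {s : Finset P.ι} {d₁ d₂ : P.ι →₀ ℕ} (h : d₁ + d₂ = ind P s) :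
    d₁.support ⊆ s ∧ d₁ = ind P d₁.support ∧ d₂ = ind P (s \ d₁.support) := by
  classical
  have key : ∀ i, d₁ i + d₂ i = if i ∈ s then 1 else 0 := by
    intro i
    rw [← ind_apply, ← h]; rfl
  have hsub : d₁.support ⊆ s := by
    intro i hi
    rw [Finsupp.mem_support_iff] at hi
    have := key i
    by_contra hns
    rw [if_neg hns] at this
    omega
  refine ⟨hsub, ?_, ?_⟩
  · ext i
    rw [ind_apply]
    have := key i
    by_cases hi : i ∈ d₁.support
    · rw [if_pos hi]
      have hi' : d₁ i ≠ 0 := Finsupp.mem_support_iff.mp hi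
      have his : i ∈ s := hsub hi
      have hk := key i
      rw [if_pos his] at hk
      omega
    · rw [if_neg hi]
      exact Finsupp.notMem_support_iff.mp hi
  · ext i
    rw [ind_apply]
    have := key i
    by_cases hi : i ∈ s
    · rw [if_pos hi] at this
      by_cases hi1 : i ∈ d₁.support
      · rw [if_neg (by simp [hi1])]
        have : d₁ i ≠ 0 := Finsupp.mem_support_iff.mp hi1
        omega
      · rw [if_pos (Finset.mem_sdiff.mpr ⟨hi, hi1⟩)]
        have : d₁ i = 0 := Finsupp.notMem_support_iff.mp hi1
        omega
    · rw [if_neg hi] at this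
      rw [if_neg (by simp [hi])]
      omega

theorem ind_add_ind {s : Finset P.ι} (a : Finset P.ι) (ha : a ⊆ s) :
    ind P a + ind P (s \ a) = ind P s := by
  classical
  ext i
  simp only [Finsupp.add_apply, ind_apply, Finset.mem_sdiff]
  by_cases hi : i ∈ s <;> by_cases hia : i ∈ a <;>
    simp_all [Finset.mem_of_subset ha]

theorem phi_mul (p q : MvPolynomial P.ι ℕ) :
    phi P (p * q) = conv P (phi P p) (phi P q) := by
  classical
  funext s
  by_cases hs : Adm P s
  · simp only [phi, conv, if_pos hs]
    rw [MvPolynomial.coeff_mul]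
    refine Finset.sum_nbij' (i := fun x => x.1.support)
      (j := fun a => (ind P a, ind P (s \ a))) ?_ ?_ ?_ ?_ ?_
    · intro x hx
      rw [Finset.HasAntidiagonal.mem_antidiagonal] at hx
      exact Finset.mem_powerset.mpr (decomp P hx).1
    · intro a ha
      rw [Finset.HasAntidiagonal.mem_antidiagonal]
      exact ind_add_ind P a (Finset.mem_powerset.mp ha)
    · intro x hx
      rw [Finset.HasAntidiagonal.mem_antidiagonal] at hx
      obtain ⟨h1, h2, h3⟩ := decomp P hx
      exact Prod.ext h2.symm h3.symm
    · intro a _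
      exact support_ind P a
    · intro x hx
      rw [Finset.HasAntidiagonal.mem_antidiagonal] at hx
      obtain ⟨h1, h2, h3⟩ := decomp P hx
      have ha1 : Adm P x.1.support := adm_subset P h1 hs
      have ha2 : Adm P (s \ x.1.support) := adm_subset P (Finset.sdiff_subset) hs
      rw [if_pos ha1, if_pos ha2, ← h2, ← h3]
  · simp only [phi, conv, if_neg hs]

theorem phi_rel {p q : MvPolynomial P.ι ℕ} (h : rel P p q) : phi P p = phi P q := by
  classical
  obtain ⟨i, j, hsim, rfl, rfl⟩ := h
  funext s
  simp only [phi, MvPolynomial.coeff_zero]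
  split
  · rename_i hadm
    have hXX : (X i * X j : MvPolynomial P.ι ℕ) =
        MvPolynomial.monomial (Finsupp.single i 1 + Finsupp.single j 1) 1 := by
      rw [MvPolynomial.X, MvPolynomial.X, MvPolynomial.monomial_mul, mul_one]
    rw [hXX, MvPolynomial.coeff_monomial]
    rw [if_neg]
    intro heq
    by_cases hij : i = j
    · subst hij
      have hthis := DFunLike.congr_fun heq i
      by_cases h : i ∈ s <;>
        simp [Finsupp.single_apply, ind_apply, h] at hthis
    · have hi : i ∈ s := by
        by_contra hns
        have hthis := DFunLike.congr_fun heq i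
        simp [Finsupp.single_apply, ind_apply, hns, Ne.symm hij] at hthis
      have hj : j ∈ s := by
        by_contra hns
        have hthis := DFunLike.congr_fun heq j
        simp [Finsupp.single_apply, ind_apply, hns, hij] at hthis
      exact hadm i hi j hj hij hsim
  · rfl

/-- The kernel congruence of `phi`. -/
noncomputable def K : RingCon (MvPolynomial P.ι ℕ) where
  r p q := phi P p = phi P q
  iseqv := ⟨fun _ => rfl, Eq.symm, Eq.trans⟩
  add' := @fun a b c d h h' => by
    have h1 : phi P a = phi P b := h
    have h2 : phi P c = phi P d := h'
    show phi P (a + c) = phi P (b + d)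
    rw [phi_add, phi_add, h1, h2]
  mul' := @fun a b c d h h' => by
    have h1 : phi P a = phi P b := h
    have h2 : phi P c = phi P d := h'
    show phi P (a * c) = phi P (b * d)
    rw [phi_mul, phi_mul, h1, h2]

theorem hfac : ∀ p q : MvPolynomial P.ι ℕ,
    (ringConGen (rel P)) p q → phi P p = phi P q := by
  intro p q h
  exact (RingCon.ringConGen_le (c := K P)).mpr (fun x y hr => phi_rel P hr) h

/-- The congruence of the presentation. -/
noncomputable def theCon : RingCon (MvPolynomial P.ι ℕ) :=
  ringConGen (rel P)

theorem carrier_eq : P.Carrier = (theCon P).Quotient := rfl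

/-- `phi` descends to the quotient, as an additive monoid hom. -/
noncomputable def Phi : P.Carrier →+ (Finset P.ι → ℕ) where
  toFun := fun z => Quotient.lift (phi P) (fun a b h => hfac P a b h)
    (show (theCon P).Quotient from z)
  map_zero' := by
    show phi P 0 = 0
    funext s
    simp [phi]
  map_add' := by
    intro x y
    induction x using Quotient.ind
    induction y using Quotient.ind
    exact phi_add P _ _

theorem Phi_mk (p : MvPolynomial P.ι ℕ) :
    Phi P (RingCon.mk' (theCon P) p) = phi P p := rfl

theorem prod_X_eq (s : Finset P.ι) :
    (∏ i ∈ s, (X i : MvPolynomial P.ι ℕ)) = MvPolynomial.monomial (ind P s) 1 := by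
  classical
  induction s using Finset.induction_on with
  | empty => simp [ind, MvPolynomial.monomial_zero']
  | @insert i t hi ih =>
    rw [Finset.prod_insert hi, ih, MvPolynomial.X, MvPolynomial.monomial_mul, one_mul]
    congr 1
    simp [ind, Finset.sum_insert hi]

theorem mk_prod (s : Finset P.ι) :
    (∏ i ∈ s, P.gen i) = RingCon.mk' (theCon P) (MvPolynomial.monomial (ind P s) 1) := by
  rw [← prod_X_eq, map_prod]
  rfl

theorem Phi_prod (s t : Finset P.ι) :
    Phi P (∏ i ∈ s, P.gen i) t = if Adm P t ∧ t = s then 1 else 0 := by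
  classical
  rw [mk_prod, Phi_mk]
  simp only [phi, MvPolynomial.coeff_monomial]
  by_cases ht : Adm P t
  · rw [if_pos ht]
    by_cases hts : t = s
    · subst hts
      rw [if_pos rfl, if_pos ⟨ht, rfl⟩]
    · rw [if_neg (fun h => hts (ind_inj P h.symm)), if_neg (fun h => hts h.2)]
  · rw [if_neg ht, if_neg (fun h => ht h.1)]

theorem bad_monomial {u : P.ι →₀ ℕ} (hbad : ¬ ∃ s, Adm P s ∧ u = ind P s) :
    ∃ i j, P.sim i j ∧ Finsupp.single i 1 + Finsupp.single j 1 ≤ u := by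
  classical
  by_cases hle : ∀ i, u i ≤ 1
  · have hu : u = ind P u.support := by
      ext i
      rw [ind_apply]
      by_cases hi : i ∈ u.support
      · rw [if_pos hi]
        have := Finsupp.mem_support_iff.mp hi
        have := hle i
        omega
      · rw [if_neg hi]
        exact Finsupp.notMem_support_iff.mp hi
    have hnadm : ¬ Adm P u.support := fun h => hbad ⟨u.support, h, hu⟩
    rw [Adm] at hnadm
    push_neg at hnadm
    obtain ⟨i, hi, j, hj, hij, hsim⟩ := hnadm
    refine ⟨i, j, hsim, ?_⟩
    intro k
    have hi' : u i ≠ 0 := Finsupp.mem_support_iff.mp hi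
    have hj' : u j ≠ 0 := Finsupp.mem_support_iff.mp hj
    simp only [Finsupp.add_apply, Finsupp.single_apply]
    split_ifs with hki hkj hkj
    · exact absurd (hki.trans hkj.symm) hij
    · subst hki; omega
    · subst hkj; omega
    · omega
  · push_neg at hle
    obtain ⟨i, hi⟩ := hle
    refine ⟨i, i, P.refl i, ?_⟩
    intro k
    simp only [Finsupp.add_apply, Finsupp.single_apply]
    split_ifs with hki
    · subst hki; omega
    · omega

theorem mk_bad_monomial {u : P.ι →₀ ℕ} (a : ℕ)
    (hbad : ¬ ∃ s, Adm P s ∧ u = ind P s) :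
    RingCon.mk' (theCon P) (MvPolynomial.monomial u a) = 0 := by
  obtain ⟨i, j, hsim, hle⟩ := bad_monomial P hbad
  have hfact : (MvPolynomial.monomial u a : MvPolynomial P.ι ℕ) =
      (X i * X j) * MvPolynomial.monomial (u - (Finsupp.single i 1 + Finsupp.single j 1)) a := by
    rw [MvPolynomial.X, MvPolynomial.X, MvPolynomial.monomial_mul,
      MvPolynomial.monomial_mul, one_mul, one_mul, add_tsub_cancel_of_le hle]
  rw [hfact, map_mul]
  have hz : RingCon.mk' (theCon P) (X i * X j) = 0 := by
    have : (theCon P) (X i * X j) 0 :=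
      RingConGen.Rel.of _ _ ⟨i, j, hsim, rfl, rfl⟩
    exact (RingCon.eq _).mpr this
  rw [hz, zero_mul]

theorem mk_eq (p : MvPolynomial P.ι ℕ) :
    (RingCon.mk' (theCon P) p : P.Carrier) =
      ∑ s : Finset P.ι, phi P p s • (∏ i ∈ s, P.gen i) := by
  classical
  induction p using MvPolynomial.induction_on' with
  | monomial u a =>
    by_cases hgood : ∃ s, Adm P s ∧ u = ind P s
    · obtain ⟨s₀, hadm, rfl⟩ := hgood
      have hsum : (∑ s : Finset P.ι, phi P (MvPolynomial.monomial (ind P s₀) a) s •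
          (∏ i ∈ s, P.gen i)) = a • (∏ i ∈ s₀, P.gen i) := by
        rw [Finset.sum_eq_single s₀]
        · congr 1
          simp [phi, if_pos hadm, MvPolynomial.coeff_monomial]
        · intro s _ hne
          have : phi P (MvPolynomial.monomial (ind P s₀) a) s = 0 := by
            simp only [phi, MvPolynomial.coeff_monomial]
            split
            · rw [if_neg]
              intro h
              exact hne (ind_inj P h.symm)
            · rfl
          rw [this, zero_smul]
        · intro h
          exact absurd (Finset.mem_univ s₀) h
      rw [hsum, mk_prod]
      have hCm : (MvPolynomial.monomial (ind P s₀) a : MvPolynomial P.ι ℕ) =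
          MvPolynomial.C a * MvPolynomial.monomial (ind P s₀) 1 := by
        rw [MvPolynomial.C_mul_monomial, mul_one]
      rw [hCm, map_mul]
      have hC : RingCon.mk' (theCon P) (MvPolynomial.C (a : ℕ)) = (a : P.Carrier) := by
        have hca : (MvPolynomial.C (a : ℕ) : MvPolynomial P.ι ℕ) =
            ((a : ℕ) : MvPolynomial P.ι ℕ) := by
          rw [← MvPolynomial.C_eq_coe_nat, Nat.cast_id]
        rw [hca, map_natCast]
        rfl
      rw [hC]
      exact (nsmul_eq_mul (α := P.Carrier) _ _).symm
    · have hsum : (∑ s : Finset P.ι, phi P (MvPolynomial.monomial u a) s •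
          (∏ i ∈ s, P.gen i)) = 0 := by
        apply Finset.sum_eq_zero
        intro s _
        have : phi P (MvPolynomial.monomial u a) s = 0 := by
          simp only [phi, MvPolynomial.coeff_monomial]
          split
          · rename_i hadm
            rw [if_neg]
            intro h
            exact hgood ⟨s, hadm, h⟩
          · rfl
        rw [this, zero_smul]
      rw [hsum]
      exact mk_bad_monomial P a hgood
  | add p q hp hq =>
    rw [map_add, hp, hq, phi_add]
    refine (Finset.sum_add_distrib (M := P.Carrier)).symm.trans ?_
    apply Finset.sum_congr rfl
    intro s _
    rw [Pi.add_apply, add_smul]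

end WeilAux

/-- As a commutative monoid under addition, a Weil-algebra is free on its nonzero
monomials: every element is a unique ℕ-linear combination of the square-free monomials
`∏_{i ∈ s} xᵢ` indexed by sets `s` of generators containing no two distinct `∼`-related
indices. -/
theorem weil_additive_basis_of_monomials (P : WeilPres) (z : P.Carrier) :
    ∃! c : Finset P.ι → ℕ,
      (∀ s : Finset P.ι, ¬ (∀ i ∈ s, ∀ j ∈ s, i ≠ j → ¬ P.sim i j) → c s = 0) ∧
      z = ∑ s : Finset P.ι, c s • (∏ i ∈ s, P.gen i) := by
  classical
  open WeilAux in
  obtain ⟨p, rfl⟩ : ∃ p : MvPolynomial P.ι ℕ, RingCon.mk' (theCon P) p = z := by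
    obtain ⟨p, hp⟩ := Quot.exists_rep (show (theCon P).Quotient from z)
    exact ⟨p, hp⟩
  refine ⟨WeilAux.phi P p, ⟨?_, ?_⟩, ?_⟩
  · intro s hs
    exact if_neg hs
  · exact WeilAux.mk_eq P p
  · intro c' ⟨hvan, hrep⟩
    funext t
    by_cases hadm : WeilAux.Adm P t
    · have h1 : WeilAux.Phi P (RingCon.mk' (WeilAux.theCon P) p) t = WeilAux.phi P p t := by
        rw [WeilAux.Phi_mk]
      have h2 : WeilAux.Phi P (∑ s : Finset P.ι, c' s • (∏ i ∈ s, P.gen i)) t = c' t := by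
        rw [map_sum]
        rw [Finset.sum_apply]
        have : ∀ s : Finset P.ι,
            (WeilAux.Phi P (c' s • (∏ i ∈ s, P.gen i))) t
              = c' s * (if WeilAux.Adm P t ∧ t = s then 1 else 0) := by
          intro s
          rw [map_nsmul]
          rw [Pi.smul_apply, WeilAux.Phi_prod, smul_eq_mul]
        rw [Finset.sum_congr rfl (fun s _ => this s)]
        rw [Finset.sum_eq_single t]
        · rw [if_pos ⟨hadm, rfl⟩, mul_one]
        · intro s _ hne
          rw [if_neg (fun h => hne h.2.symm), mul_zero]
        · intro h
          exact absurd (Finset.mem_univ t) h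
      rw [← h1, hrep, h2]
    · rw [hvan t hadm]
      exact (if_neg hadm).symm
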